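/- Let a, b ∈ 𝒪 with a ≠ 0, where 𝒪 is the real Okubo algebra. Then the equation a*x = b has the unique solution x = n(a)⁻¹·(b*a), and the equation x*a = b has the unique solution x = n(a)⁻¹·(a*b). -/
import Mathlib


open Matrix Complex

noncomputable section

/-- `3 × 3` complex matrices. -/
abbrev M3 : Type := Matrix (Fin 3) (Fin 3) ℂ

/-- The real Okubo algebra: `3 × 3` traceless Hermitian complex matrices. -/
def Okubo : Set M3 := {x | x.IsHermitian ∧ x.trace = 0}

/-- The constant `μ = (3 + i√3)/6`. -/
def okMu : ℂ := (3 + (Real.sqrt 3 : ℂ) * Complex.I) / 6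

/-- The Okubo product `x*y = μ·(xy) + μ̄·(yx) − (1/3)Tr(xy)·Id`. -/
def omul (x y : M3) : M3 :=
  okMu • (x * y) + (starRingEnd ℂ) okMu • (y * x) - ((1 / 3 : ℂ) * (x * y).trace) • (1 : M3)

/-- The Okubic norm `n(x) = (1/6)Tr(x²)` (real-valued on Hermitian matrices). -/
def onorm (x : M3) : ℝ := (1 / 6) * ((x * x).trace).re

/-- The polar form `⟨x,y⟩ = n(x+y) − n(x) − n(y)` of the Okubic norm. -/
def opolar (x y : M3) : ℝ := onorm (x + y) - onorm x - onorm y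

lemma conj_okMu : (starRingEnd ℂ) okMu = (3 - (Real.sqrt 3 : ℂ) * Complex.I) / 6 := by
  rw [okMu]
  rw [map_div₀, map_add]
  simp [Complex.conj_I, Complex.conj_ofReal]
  norm_num [map_ofNat]
  ring

lemma mu_add : okMu + (starRingEnd ℂ) okMu = 1 := by
  rw [conj_okMu, okMu]; ring

lemma mu_mul : okMu * (starRingEnd ℂ) okMu = 1/3 := by
  rw [conj_okMu, okMu]
  have h3 : ((Real.sqrt 3 : ℝ) : ℂ) * ((Real.sqrt 3 : ℝ) : ℂ) = 3 := by
    norm_cast; exact Real.mul_self_sqrt (by norm_num)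
  linear_combination (1/36) * h3 - ((Real.sqrt 3:ℂ) * (Real.sqrt 3:ℂ)/36) * Complex.I_sq

lemma CH (a b : M3) (ha : a.trace = 0) (hb : b.trace = 0) :
    a*b*a + a*a*b + b*a*a =
      (a*b).trace • a + ((1/2:ℂ)*(a*a).trace) • b + (a*a*b).trace • (1:M3) := by
  simp only [Matrix.trace, Matrix.diag, Fin.sum_univ_three] at ha hb
  have ha2 : a 2 2 = -(a 0 0 + a 1 1) := by linear_combination ha
  have hb2 : b 2 2 = -(b 0 0 + b 1 1) := by linear_combination hb
  ext i j
  fin_cases i <;> fin_cases j <;>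
    simp [Matrix.mul_apply, Matrix.trace, Matrix.diag, Fin.sum_univ_three,
      Matrix.one_apply, ha2, hb2] <;> ring

lemma omul_omul_left (a b : M3) (ha : a.trace = 0) (hb : b.trace = 0) :
    omul a (omul b a) = ((1/6:ℂ) * (a*a).trace) • b := by
  have hm := mu_add
  have hmm := mu_mul
  set m := okMu with hm'
  set c := (starRingEnd ℂ) okMu with hc'
  have hBA : (b*a).trace = (a*b).trace := Matrix.trace_mul_comm b a
  have hCH := CH a b ha hb
  simp only [omul]
  rw [hBA]
  simp only [Matrix.mul_add, Matrix.add_mul, Matrix.mul_sub, Matrix.sub_mul,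
    Matrix.mul_smul, Matrix.smul_mul, Matrix.mul_one, Matrix.one_mul,
    Matrix.trace_add, Matrix.trace_sub, Matrix.trace_smul, smul_eq_mul,
    Matrix.trace_one, ← Matrix.mul_assoc]
  have hABA2 : (a*b*a).trace = (a*a*b).trace := by
    rw [Matrix.trace_mul_comm (a*b) a, ← Matrix.mul_assoc]
  rw [ha, hABA2]
  have hA : a*b*a = (a*b).trace • a + ((1/2:ℂ)*(a*a).trace) • b + (a*a*b).trace • (1:M3)
      - a*a*b - b*a*a := by rw [← hCH]; abel
  rw [hA]
  rw [← hm', ← hc']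
  have e1 : m^2 + c^2 = 1/3 := by linear_combination (m+c+1)*hm - 2*hmm
  match_scalars
  · linear_combination ((a*b).trace)*e1 - (1/3*(a*b).trace)*hm
  · linear_combination (1/2*(a*a).trace)*e1
  · linear_combination ((a*a*b).trace)*e1 - (1/3*(a*a*b).trace)*hm
  · linear_combination hmm - e1
  · linear_combination hmm - e1

lemma omul_omul_right (a b : M3) (ha : a.trace = 0) (hb : b.trace = 0) :
    omul (omul a b) a = ((1/6:ℂ) * (a*a).trace) • b := by
  have hm := mu_add
  have hmm := mu_mul
  set m := okMu with hm'
  set c := (starRingEnd ℂ) okMu with hc'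
  have hCH := CH a b ha hb
  simp only [omul]
  simp only [Matrix.mul_add, Matrix.add_mul, Matrix.mul_sub, Matrix.sub_mul,
    Matrix.mul_smul, Matrix.smul_mul, Matrix.mul_one, Matrix.one_mul,
    Matrix.trace_add, Matrix.trace_sub, Matrix.trace_smul, smul_eq_mul,
    Matrix.trace_one, ← Matrix.mul_assoc]
  have hABA2 : (a*b*a).trace = (a*a*b).trace := by
    rw [Matrix.trace_mul_comm (a*b) a, ← Matrix.mul_assoc]
  have hBAA : (b*a*a).trace = (a*a*b).trace := by
    rw [Matrix.trace_mul_comm (b*a) a, ← Matrix.mul_assoc]; exact hABA2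
  rw [ha, hABA2, hBAA]
  have hA : a*b*a = (a*b).trace • a + ((1/2:ℂ)*(a*a).trace) • b + (a*a*b).trace • (1:M3)
      - a*a*b - b*a*a := by rw [← hCH]; abel
  rw [hA]
  rw [← hm', ← hc']
  have e1 : m^2 + c^2 = 1/3 := by linear_combination (m+c+1)*hm - 2*hmm
  match_scalars
  · linear_combination ((a*b).trace)*e1 - (1/3*(a*b).trace)*hm
  · linear_combination (1/2*(a*a).trace)*e1
  · linear_combination ((a*a*b).trace)*e1 - (1/3*(a*a*b).trace)*hm
  · linear_combination hmm - e1
  · linear_combination hmm - e1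

lemma rsmul (r : ℝ) (M : M3) : r • M = ((r:ℂ)) • M := by
  ext i j; simp [Matrix.smul_apply, Complex.real_smul]

lemma omul_smul_right (z : ℂ) (x y : M3) : omul x (z • y) = z • omul x y := by
  simp only [omul, Matrix.mul_smul, Matrix.smul_mul, Matrix.trace_smul, smul_eq_mul, smul_smul]
  match_scalars <;> ring

lemma omul_smul_left (z : ℂ) (x y : M3) : omul (z • x) y = z • omul x y := by
  simp only [omul, Matrix.mul_smul, Matrix.smul_mul, Matrix.trace_smul, smul_eq_mul, smul_smul]
  match_scalars <;> ring

lemma omul_mem {x y : M3} (hx : x ∈ Okubo) (hy : y ∈ Okubo) : omul x y ∈ Okubo := by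
  obtain ⟨hxH, hxT⟩ := hx
  obtain ⟨hyH, hyT⟩ := hy
  have ht : star ((x*y).trace) = (x*y).trace := by
    rw [← Matrix.trace_conjTranspose, Matrix.conjTranspose_mul, hxH, hyH,
      Matrix.trace_mul_comm]
  constructor
  · show (omul x y)ᴴ = omul x y
    simp only [omul, Matrix.conjTranspose_sub, Matrix.conjTranspose_add,
      Matrix.conjTranspose_smul, Matrix.conjTranspose_mul, Matrix.conjTranspose_one,
      hxH.eq, hyH.eq, star_mul', ht]
    have ht' : (starRingEnd ℂ) ((x*y).trace) = (x*y).trace := ht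
    simp only [Complex.star_def, Complex.conj_conj, map_div₀, _root_.map_one, map_ofNat, ht, ht']
    abel
  · show (omul x y).trace = 0
    simp only [omul, Matrix.trace_sub, Matrix.trace_add, Matrix.trace_smul,
      Matrix.trace_one, smul_eq_mul, Matrix.trace_mul_comm y x, Fintype.card_fin]
    have := mu_add
    linear_combination ((x*y).trace) * this

lemma smul_mem_okubo (r : ℝ) {x : M3} (hx : x ∈ Okubo) : r • x ∈ Okubo := by
  constructor
  · show (r • x)ᴴ = r • x
    rw [rsmul, Matrix.conjTranspose_smul, Complex.star_def, Complex.conj_ofReal, hx.1]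
  · show (r • x).trace = 0
    rw [rsmul, Matrix.trace_smul, hx.2, smul_zero]

lemma onorm_coe (a : M3) (h : a.IsHermitian) : ((onorm a : ℝ) : ℂ) = (1/6:ℂ) * (a*a).trace := by
  have hst : star ((a*a).trace) = (a*a).trace := by
    rw [← Matrix.trace_conjTranspose, Matrix.conjTranspose_mul, h.eq]
  have hr : ((((a*a).trace).re : ℝ) : ℂ) = (a*a).trace := Complex.conj_eq_iff_re.mp hst
  rw [onorm, Complex.ofReal_mul, hr]
  norm_num

lemma onorm_pos (a : M3) (h : a.IsHermitian) (hne : a ≠ 0) : 0 < onorm a := by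
  have hent : ∀ i j, a j i = star (a i j) := fun i j => (h.apply j i).symm
  have e : ∀ z w : ℂ, w = star z → (z * w).re = Complex.normSq z := by
    intro z w hw
    rw [hw]
    simpa using congrArg Complex.re (Complex.mul_conj z)
  have key : ((a*a).trace).re = ∑ i : Fin 3, ∑ j : Fin 3, Complex.normSq (a i j) := by
    simp only [Matrix.trace, Matrix.diag, Matrix.mul_apply, Fin.sum_univ_three,
      Complex.add_re]
    rw [e _ _ (hent 0 0), e _ _ (hent 0 1), e _ _ (hent 0 2),
        e _ _ (hent 1 0), e _ _ (hent 1 1), e _ _ (hent 1 2),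
        e _ _ (hent 2 0), e _ _ (hent 2 1), e _ _ (hent 2 2)]
  obtain ⟨i, j, hij⟩ : ∃ i j, a i j ≠ 0 := by
    by_contra hc
    push_neg at hc
    exact hne (by ext i j; simpa using hc i j)
  have h1 : 0 < Complex.normSq (a i j) := Complex.normSq_pos.mpr hij
  have h2 : 0 < ∑ i : Fin 3, ∑ j : Fin 3, Complex.normSq (a i j) := by
    have hle1 : Complex.normSq (a i j) ≤ ∑ j : Fin 3, Complex.normSq (a i j) :=
      Finset.single_le_sum (fun k _ => Complex.normSq_nonneg (a i k)) (Finset.mem_univ j)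
    have hle2 : (∑ j : Fin 3, Complex.normSq (a i j)) ≤
        ∑ i : Fin 3, ∑ j : Fin 3, Complex.normSq (a i j) :=
      Finset.single_le_sum
        (fun k _ => Finset.sum_nonneg fun l _ => Complex.normSq_nonneg (a k l))
        (Finset.mem_univ i)
    linarith
  rw [onorm, key]
  linarith

/-- For `a, b ∈ 𝒪` with `a ≠ 0`, the equation `a*x = b` has the
unique solution `x = n(a)⁻¹ • (b*a)`, and the equation `x*a = b` has the unique
solution `x = n(a)⁻¹ • (a*b)`. -/
theorem okubo_paper_stmt8 (a b : M3) (ha : a ∈ Okubo) (hb : b ∈ Okubo) (hne : a ≠ 0) :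
    ((onorm a)⁻¹ • omul b a ∈ Okubo ∧
      omul a ((onorm a)⁻¹ • omul b a) = b ∧
      (∀ x ∈ Okubo, omul a x = b → x = (onorm a)⁻¹ • omul b a)) ∧
    ((onorm a)⁻¹ • omul a b ∈ Okubo ∧
      omul ((onorm a)⁻¹ • omul a b) a = b ∧
      (∀ x ∈ Okubo, omul x a = b → x = (onorm a)⁻¹ • omul a b)) := by
  obtain ⟨haH, haT⟩ := ha
  obtain ⟨hbH, hbT⟩ := hb
  have hn : 0 < onorm a := onorm_pos a haH hne
  have hn0 : onorm a ≠ 0 := ne_of_gt hn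
  have hcoe := onorm_coe a haH
  have hone : ((((onorm a)⁻¹ : ℝ)) : ℂ) * (((onorm a : ℝ)) : ℂ) = 1 := by
    norm_cast
    exact inv_mul_cancel₀ hn0
  constructor
  · refine ⟨smul_mem_okubo _ (omul_mem ⟨hbH, hbT⟩ ⟨haH, haT⟩), ?_, ?_⟩
    · rw [rsmul, omul_smul_right, omul_omul_left a b haT hbT, ← hcoe, smul_smul, hone,
        one_smul]
    · intro x hx hax
      have h1 := omul_omul_right a x haT hx.2
      rw [hax, ← hcoe] at h1
      rw [h1, rsmul, smul_smul, hone, one_smul]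
  · refine ⟨smul_mem_okubo _ (omul_mem ⟨haH, haT⟩ ⟨hbH, hbT⟩), ?_, ?_⟩
    · rw [rsmul, omul_smul_left, omul_omul_right a b haT hbT, ← hcoe, smul_smul, hone,
        one_smul]
    · intro x hx hxa
      have h1 := omul_omul_left a x haT hx.2
      rw [hxa, ← hcoe] at h1
      rw [h1, rsmul, smul_smul, hone, one_smul]

end
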